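/- arXiv:2004.14177 — 2 statements merged into one kernel-verified Lean document; each statement's English description precedes it below -/
import Mathlib

section
/- Let α ∈ (0,1), λ > 0, and define the Mittag-Leffler function f(x) = ∑_{k≥0} (-λ x^α)^k / Γ(αk + 1) for x ≥ 0. Then the Laplace transform of f satisfies ∫₀^∞ e^{-sx} f(x) dx = s^{α-1}/(λ + s^α) for all s > λ^{1/α}. -/
open MeasureTheory Real

lemma ml_aux_integrable {p b : ℝ} (hp : 0 ≤ p) (hb : 0 < b) :
    IntegrableOn (fun x : ℝ => x ^ p * Real.exp (-(b * x))) (Set.Ioi 0) := by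
  have := integrableOn_rpow_mul_exp_neg_mul_rpow (by linarith : (-1:ℝ) < p) (by norm_num : (0:ℝ) < 1) hb
  refine this.congr_fun (fun x hx => ?_) measurableSet_Ioi
  dsimp only
  rw [Real.rpow_one, neg_mul]

theorem laplace_transform_mittagLeffler
    (α l : ℝ) (hα : 0 < α) (hα1 : α < 1) (hl : 0 < l)
    (f : ℝ → ℝ)
    (hf : ∀ x : ℝ, 0 ≤ x → f x = ∑' k : ℕ, (-l * x ^ α) ^ k / Real.Gamma (α * k + 1)) :
    ∀ s : ℝ, l ^ (1 / α) < s →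
      ∫ x in Set.Ioi (0:ℝ), Real.exp (-s * x) * f x = s ^ (α - 1) / (l + s ^ α) := by
  intro s hs
  have hs0 : 0 < s := lt_of_le_of_lt (Real.rpow_nonneg hl.le _) hs
  have hsa : l < s ^ α := by
    have h1 : (l ^ (1/α)) ^ α < s ^ α :=
      Real.rpow_lt_rpow (Real.rpow_nonneg hl.le _) hs hα
    rwa [← Real.rpow_mul hl.le, one_div_mul_cancel hα.ne', Real.rpow_one] at h1
  have hsa0 : 0 < s ^ α := Real.rpow_pos_of_pos hs0 α
  set G : ℕ → ℝ → ℝ :=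
    fun k x => Real.exp (-s * x) * ((-l * x ^ α) ^ k / Real.Gamma (α * k + 1)) with hG
  have hΓ : ∀ k : ℕ, 0 < Real.Gamma (α * k + 1) := fun k =>
    Real.Gamma_pos_of_pos (by positivity)
  have hEq : ∀ k : ℕ, ∀ x ∈ Set.Ioi (0:ℝ),
      G k x = ((-l) ^ k / Real.Gamma (α * k + 1)) *
        (x ^ ((α * k + 1) - 1) * Real.exp (-(s * x))) := by
    intro k x hx
    have hx0 : (0:ℝ) ≤ x := (le_of_lt hx)
    simp only [hG, add_sub_cancel_right]
    rw [mul_pow, ← Real.rpow_natCast (x ^ α) k, ← Real.rpow_mul hx0, neg_mul s x]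
    ring
  have hEqNorm : ∀ k : ℕ, ∀ x ∈ Set.Ioi (0:ℝ),
      ‖G k x‖ = (l ^ k / Real.Gamma (α * k + 1)) *
        (x ^ ((α * k + 1) - 1) * Real.exp (-(s * x))) := by
    intro k x hx
    have hx0 : (0:ℝ) < x := hx
    have habs : |(-l * x ^ α)| = l * x ^ α := by
      rw [abs_of_nonpos (by nlinarith [Real.rpow_pos_of_pos hx0 α])]
      ring
    rw [Real.norm_eq_abs, abs_mul, abs_of_pos (Real.exp_pos _), abs_div,
      abs_of_pos (hΓ k), abs_pow, habs, add_sub_cancel_right, mul_pow,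
      ← Real.rpow_natCast (x ^ α) k, ← Real.rpow_mul hx0.le, neg_mul s x]
    ring
  have hInt : ∀ k : ℕ, IntegrableOn (G k) (Set.Ioi 0) := by
    intro k
    have h2 : IntegrableOn (fun x : ℝ => ((-l) ^ k / Real.Gamma (α * k + 1)) *
        (x ^ (α * k) * Real.exp (-(s * x)))) (Set.Ioi 0) :=
      (ml_aux_integrable (by positivity : (0:ℝ) ≤ α * k) hs0).const_mul _
    exact IntegrableOn.congr_fun h2
      (fun x hx => by rw [hEq k x hx, add_sub_cancel_right]) measurableSet_Ioi
  have hIntVal : ∀ k : ℕ, ∫ x in Set.Ioi (0:ℝ), G k x = (-l) ^ k * (1 / s) ^ (α * k + 1) := by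
    intro k
    rw [setIntegral_congr_fun measurableSet_Ioi (hEq k), integral_const_mul,
      integral_rpow_mul_exp_neg_mul_Ioi (by positivity) hs0]
    field_simp
  have hNormVal : ∀ k : ℕ, ∫ x in Set.Ioi (0:ℝ), ‖G k x‖ = l ^ k * (1 / s) ^ (α * k + 1) := by
    intro k
    rw [setIntegral_congr_fun measurableSet_Ioi (hEqNorm k), integral_const_mul,
      integral_rpow_mul_exp_neg_mul_Ioi (by positivity) hs0]
    field_simp
  have hpow : ∀ c : ℝ, ∀ k : ℕ, c ^ k * (1 / s) ^ (α * k + 1) = (1 / s) * (c / s ^ α) ^ k := by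
    intro c k
    rw [Real.rpow_add (by positivity), Real.rpow_one, one_div, Real.inv_rpow hs0.le,
      div_pow, ← Real.rpow_natCast (s ^ α) k, ← Real.rpow_mul hs0.le]
    have hne : s ^ (α * (k:ℝ)) ≠ 0 := (Real.rpow_pos_of_pos hs0 _).ne'
    field_simp
  have hratio : l / s ^ α < 1 := (div_lt_one hsa0).mpr hsa
  have hSum : Summable fun k : ℕ => ∫ x in Set.Ioi (0:ℝ), ‖G k x‖ := by
    simp_rw [hNormVal, hpow l]
    exact (summable_geometric_of_lt_one (by positivity) hratio).mul_left _
  have hswap : ∑' k : ℕ, ∫ x in Set.Ioi (0:ℝ), G k x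
      = ∫ x in Set.Ioi (0:ℝ), ∑' k : ℕ, G k x :=
    integral_tsum_of_summable_integral_norm hInt hSum
  have hfx : ∀ x ∈ Set.Ioi (0:ℝ), Real.exp (-s * x) * f x = ∑' k : ℕ, G k x := by
    intro x hx
    rw [hf x (le_of_lt hx), ← tsum_mul_left]
  rw [setIntegral_congr_fun measurableSet_Ioi hfx, ← hswap]
  have : ∑' k : ℕ, ∫ x in Set.Ioi (0:ℝ), G k x = (1 / s) * (1 - (-(l / s ^ α)))⁻¹ := by
    simp_rw [hIntVal, hpow (-l)]
    rw [tsum_mul_left]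
    congr 1
    have : ∀ k : ℕ, (-l / s ^ α) ^ k = (-(l / s ^ α)) ^ k := by
      intro k; rw [neg_div]
    simp_rw [this]
    exact tsum_geometric_of_norm_lt_one (by rwa [norm_neg, Real.norm_eq_abs,
      abs_of_pos (by positivity)])
  rw [this]
  rw [sub_neg_eq_add]
  have hs1 : s ^ (α - 1) = s ^ α / s := by
    rw [Real.rpow_sub hs0, Real.rpow_one]
  rw [hs1]
  field_simp
  exact add_comm _ _
end

section
/- Let α ∈ (0,1) and let h(u,t) be a nonnegative kernel with ∫₀^∞ h(u,t) du = 1 for each t > 0 and ∫₀^∞ e^{-st} h(u,t) dt = s^{α-1} e^{-u s^α}. Suppose φ₁ : (0,∞) → [0,1] is measurable with Laplace transform Φ(s) = ∫₀^∞ e^{-su} φ₁(u) du = (1/s) ∏_{i=0}^{n-1} c_i/(s + c_i), where c_0, …, c_{n-1} > 0. Then φ_α(t) := ∫₀^∞ φ₁(u) h(u,t) du has Laplace transform ∫₀^∞ e^{-st} φ_α(t) dt = (1/s) ∏_{i=0}^{n-1} c_i/(s^α + c_i). -/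
open MeasureTheory Real

set_option maxHeartbeats 1000000

theorem time_changed_arrival_laplace
    (α : ℝ) (hα : 0 < α) (hα1 : α < 1)
    (h : ℝ → ℝ → ℝ) (hmeas : Measurable (Function.uncurry h))
    (hnonneg : ∀ u t, 0 < u → 0 < t → 0 ≤ h u t)
    (hdens : ∀ t : ℝ, 0 < t → ∫ u in Set.Ioi (0:ℝ), h u t = 1)
    (hlap : ∀ s u : ℝ, 0 < s → 0 < u →
      ∫ t in Set.Ioi (0:ℝ), Real.exp (-s * t) * h u t = s ^ (α - 1) * Real.exp (-u * s ^ α))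
    (n : ℕ) (c : ℕ → ℝ) (hc : ∀ i ∈ Finset.range n, 0 < c i)
    (φ : ℝ → ℝ) (hφmeas : Measurable φ)
    (hφ01 : ∀ u : ℝ, 0 < u → φ u ∈ Set.Icc (0:ℝ) 1)
    (hΦ : ∀ s : ℝ, 0 < s →
      ∫ u in Set.Ioi (0:ℝ), Real.exp (-s * u) * φ u =
        (1 / s) * ∏ i ∈ Finset.range n, c i / (s + c i)) :
    ∀ s : ℝ, 0 < s →
      ∫ t in Set.Ioi (0:ℝ), Real.exp (-s * t) * (∫ u in Set.Ioi (0:ℝ), φ u * h u t) =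
        (1 / s) * ∏ i ∈ Finset.range n, c i / (s ^ α + c i) := by
  intro s hs
  set μ : Measure ℝ := volume.restrict (Set.Ioi (0:ℝ)) with hμdef
  have hsα : 0 < s ^ α := Real.rpow_pos_of_pos hs α
  -- measurability of slices
  have hht : ∀ t : ℝ, Measurable (fun u => h u t) := fun t =>
    hmeas.comp (measurable_id.prodMk measurable_const)
  have hhu : ∀ u : ℝ, Measurable (fun t => h u t) := fun u =>
    hmeas.comp (measurable_const.prodMk measurable_id)
  -- integrability of h(·, t)
  have hInt_h : ∀ t : ℝ, 0 < t → Integrable (fun u => h u t) μ := by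
    intro t ht
    by_contra hni
    have h1 := hdens t ht
    rw [show (∫ u in Set.Ioi (0:ℝ), h u t) = ∫ u, h u t ∂μ from rfl,
      integral_undef hni] at h1
    norm_num at h1
  -- integrability of φ·h(·,t)
  have hInt_g : ∀ t : ℝ, 0 < t → Integrable (fun u => φ u * h u t) μ := by
    intro t ht
    refine (hInt_h t ht).mono' ((hφmeas.mul (hht t)).aestronglyMeasurable) ?_
    filter_upwards [ae_restrict_mem measurableSet_Ioi] with u hu
    have h0 := hnonneg u t hu ht
    have hφu := hφ01 u hu
    rw [Real.norm_eq_abs, abs_mul, abs_of_nonneg h0, abs_of_nonneg hφu.1]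
    exact mul_le_of_le_one_left h0 hφu.2
  -- the inner integral is in [0,1]
  have hI01 : ∀ t : ℝ, 0 < t → (0 ≤ ∫ u, φ u * h u t ∂μ) ∧ (∫ u, φ u * h u t ∂μ) ≤ 1 := by
    intro t ht
    constructor
    · refine integral_nonneg_of_ae ?_
      filter_upwards [ae_restrict_mem measurableSet_Ioi] with u hu
      exact mul_nonneg (hφ01 u hu).1 (hnonneg u t hu ht)
    · calc (∫ u, φ u * h u t ∂μ) ≤ ∫ u, h u t ∂μ := by
            refine integral_mono_ae (hInt_g t ht) (hInt_h t ht) ?_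
            filter_upwards [ae_restrict_mem measurableSet_Ioi] with u hu
            exact mul_le_of_le_one_left (hnonneg u t hu ht) (hφ01 u hu).2
        _ = 1 := hdens t ht
  -- the joint function
  set F : ℝ → ℝ → ℝ := fun t u => Real.exp (-s * t) * (φ u * h u t) with hFdef
  have hFmeas : Measurable (Function.uncurry F) := by
    have : Function.uncurry F = fun p : ℝ × ℝ =>
        Real.exp (-s * p.1) * (φ p.2 * Function.uncurry h (p.2, p.1)) := rfl
    rw [this]
    exact ((measurable_fst.const_mul (-s)).exp).mul
      ((hφmeas.comp measurable_snd).mul (hmeas.comp (measurable_snd.prodMk measurable_fst)))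
  -- norm of F integral in u
  have hFnorm : ∀ t : ℝ, 0 < t →
      (∫ u, ‖F t u‖ ∂μ) = Real.exp (-s * t) * ∫ u, φ u * h u t ∂μ := by
    intro t ht
    rw [← integral_const_mul]
    refine integral_congr_ae ?_
    filter_upwards [ae_restrict_mem measurableSet_Ioi] with u hu
    rw [Real.norm_eq_abs, abs_of_nonneg]
    exact mul_nonneg (Real.exp_pos _).le (mul_nonneg (hφ01 u hu).1 (hnonneg u t hu ht))
  -- integrability on the product
  have hexpInt : Integrable (fun t => Real.exp (-s * t)) μ :=
    exp_neg_integrableOn_Ioi 0 hs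
  have hFint : Integrable (Function.uncurry F) (μ.prod μ) := by
    refine (integrable_prod_iff hFmeas.aestronglyMeasurable).mpr ⟨?_, ?_⟩
    · filter_upwards [ae_restrict_mem measurableSet_Ioi] with t ht
      simp only [Function.uncurry_apply_pair]
      exact (hInt_g t ht).const_mul _
    · refine hexpInt.mono' ?_ ?_
      · exact (hFmeas.stronglyMeasurable.norm.integral_prod_right').aestronglyMeasurable
      · filter_upwards [ae_restrict_mem measurableSet_Ioi] with t ht
        simp only [Function.uncurry_apply_pair]
        rw [Real.norm_eq_abs, abs_of_nonneg (integral_nonneg fun u => norm_nonneg _),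
          hFnorm t ht]
        exact mul_le_of_le_one_right (Real.exp_pos _).le (hI01 t ht).2
  -- rewrite LHS as a double integral and swap
  have hLHS : (∫ t in Set.Ioi (0:ℝ), Real.exp (-s * t) * (∫ u in Set.Ioi (0:ℝ), φ u * h u t))
      = ∫ u, ∫ t, F t u ∂μ ∂μ := by
    rw [← integral_integral_swap hFint]
    refine integral_congr_ae ?_
    filter_upwards [ae_restrict_mem measurableSet_Ioi] with t ht
    rw [← integral_const_mul]
  rw [hLHS]
  -- evaluate the inner t-integral using hlap
  have hinner : ∀ᵐ u ∂μ, (∫ t, F t u ∂μ) = s ^ (α - 1) * (Real.exp (-s ^ α * u) * φ u) := by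
    filter_upwards [ae_restrict_mem measurableSet_Ioi] with u hu
    have h1 : (∫ t, F t u ∂μ) = φ u * ∫ t, Real.exp (-s * t) * h u t ∂μ := by
      rw [← integral_const_mul]
      refine integral_congr_ae (ae_of_all _ fun t => ?_)
      simp only [hFdef]; ring
    rw [h1, hlap s u hs hu]
    rw [show -u * s ^ α = -s ^ α * u by ring]
    ring
  rw [integral_congr_ae hinner, integral_const_mul, hΦ (s ^ α) hsα]
  rw [← mul_assoc]
  congr 1
  rw [Real.rpow_sub hs, Real.rpow_one]
  field_simp
end
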